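/- The function u(x) := (1+x)^{−x} = exp(−x · Log(1+x)), where Log is the principal branch of the logarithm, belongs to X_α for every α ∈ (0,2] (in particular u ∈ X_1). -/

import Mathlib

/-- `ζ = (π/2) min(1, 1/α)`. -/
noncomputable def zeta (α : ℝ) : ℝ := Real.pi / 2 * min 1 (1 / α)

/-- The class `X_α` of test functions: `u` is analytic in the sector `|arg x| < ζ`,
real-valued on `(0, ∞)`, and for every `ε ∈ (0, ζ)` there is `δ > 0` such that
`|u(x)| = O(|x|^{-δ|x|})` as `|x| → ∞` and `|u(x)| = O(1)` as `|x| → 0`, uniformly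
in the sector `|arg x| ≤ ζ - ε`. -/
def MemX (α : ℝ) (u : ℂ → ℂ) : Prop :=
  (∀ x : ℂ, x ≠ 0 → |Complex.arg x| < zeta α → AnalyticAt ℂ u x) ∧
  (∀ t : ℝ, 0 < t → (u t).im = 0) ∧
  (∀ ε : ℝ, 0 < ε → ε < zeta α → ∃ δ > 0, ∃ C > 0, ∃ r > 0, ∃ R > 0,
    (∀ x : ℂ, x ≠ 0 → |Complex.arg x| ≤ zeta α - ε → ‖x‖ ≤ r → ‖u x‖ ≤ C) ∧
    (∀ x : ℂ, x ≠ 0 → |Complex.arg x| ≤ zeta α - ε → R ≤ ‖x‖ →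
      ‖u x‖ ≤ C * ‖x‖ ^ (-δ * ‖x‖)))

lemma zeta_le (α : ℝ) (hα : 0 < α) : zeta α ≤ Real.pi / 2 := by
  unfold zeta
  have h : min 1 (1/α) ≤ 1 := min_le_left _ _
  nlinarith [Real.pi_pos]

/-- The function `u(x) = (1+x)^{-x} = exp(-x Log(1+x))` (principal logarithm)
belongs to `X_α` for every `α ∈ (0, 2]`. -/
theorem stmt6 (α : ℝ) (hα1 : 0 < α) (hα2 : α ≤ 2) :
    MemX α (fun x : ℂ => Complex.exp (-x * Complex.log (1 + x))) := by
  have hζle : zeta α ≤ Real.pi / 2 := zeta_le α hα1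
  refine ⟨?_, ?_, ?_⟩
  · -- analyticity
    intro x hx hxarg
    have hre : 0 < x.re := by
      rcases Complex.abs_arg_lt_pi_div_two_iff.mp (lt_of_lt_of_le hxarg hζle) with h | h
      · exact h
      · exact absurd h hx
    have h1x : (1 + x) ∈ Complex.slitPlane := by
      rw [Complex.mem_slitPlane_iff]
      left; simp; linarith
    have ha : AnalyticAt ℂ (fun z : ℂ => 1 + z) x :=
      (analyticAt_const).add analyticAt_id
    exact ((analyticAt_id.neg).mul (ha.clog h1x)).cexp
  · -- real-valued on the positive reals
    intro t ht
    have h0 : (0:ℝ) ≤ 1 + t := by linarith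
    have h1 : (1 : ℂ) + (t:ℂ) = ((1+t : ℝ) : ℂ) := by push_cast; ring
    have key : -(t:ℂ) * Complex.log (1 + (t:ℂ)) = ((-(t * Real.log (1+t)) : ℝ) : ℂ) := by
      rw [h1, ← Complex.ofReal_log h0]
      push_cast; ring
    show (Complex.exp (-(t:ℂ) * Complex.log (1 + (t:ℂ)))).im = 0
    rw [key, ← Complex.ofReal_exp, Complex.ofReal_im]
  · -- the bounds
    intro ε hε hεζ
    have hπ : (0:ℝ) < Real.pi := Real.pi_pos
    have hεπ : ε < Real.pi / 2 := lt_of_lt_of_le hεζ hζle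
    have hsin : 0 < Real.sin ε := Real.sin_pos_of_pos_of_lt_pi hε (by linarith)
    refine ⟨Real.sin ε / 2, by positivity, Real.exp (Real.pi/2), Real.exp_pos _,
      1, one_pos, Real.exp (Real.pi / Real.sin ε), Real.exp_pos _, ?_, ?_⟩
    all_goals {
      intro x hx harg hnorm
      -- common facts
      have harg' : |x.arg| ≤ Real.pi / 2 - ε := le_trans harg (by linarith)
      have hcos : Real.sin ε ≤ Real.cos x.arg := by
        rw [← Real.cos_pi_div_two_sub ε, ← Real.cos_abs x.arg]
        exact Real.cos_le_cos_of_nonneg_of_le_pi (abs_nonneg _) (by linarith) harg'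
      have hxpos : (0:ℝ) < ‖x‖ := by
        simpa [norm_pos_iff] using hx
      have hrex : ‖x‖ * Real.cos x.arg = x.re := Complex.norm_mul_cos_arg x
      have hre0 : 0 ≤ x.re := by nlinarith
      have hresin : ‖x‖ * Real.sin ε ≤ x.re := by nlinarith
      have h1x0 : (1 + x) ≠ 0 := by
        intro h
        have : x.re = -1 := by
          have := congrArg Complex.re h
          simp at this; linarith
        linarith
      have habs1x : ‖x‖ ≤ ‖1 + x‖ := by
        have h2 : (‖x‖)^2 ≤ (‖1+x‖)^2 := by
          rw [Complex.sq_norm, Complex.sq_norm]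
          simp [Complex.normSq_apply]
          nlinarith
        exact (pow_le_pow_iff_left₀ (norm_nonneg x) (norm_nonneg _) two_ne_zero).mp h2
      have h1x1 : (1:ℝ) ≤ ‖1 + x‖ := by
        have h2 : (1:ℝ) ≤ (‖1+x‖)^2 := by
          rw [Complex.sq_norm]
          simp [Complex.normSq_apply]
          nlinarith
        nlinarith [norm_nonneg (1+x)]
      have harg1x : |Complex.arg (1 + x)| ≤ Real.pi / 2 := by
        apply le_of_lt
        apply Complex.abs_arg_lt_pi_div_two_iff.mpr
        left; simp; linarith
      have hlog0 : 0 ≤ Real.log (‖1 + x‖) := Real.log_nonneg h1x1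
      have him : |x.im| ≤ ‖x‖ := Complex.abs_im_le_norm x
      have hrecomp : (-x * Complex.log (1 + x)).re
          = -(x.re * Real.log (‖1+x‖)) + x.im * Complex.arg (1+x) := by
        simp [Complex.mul_re, Complex.log_re, Complex.log_im]
        ring
      have hnormu : ‖Complex.exp (-x * Complex.log (1 + x))‖
          = Real.exp ((-x * Complex.log (1 + x)).re) := by
        rw [Complex.norm_exp]
      have himarg : x.im * Complex.arg (1+x) ≤ ‖x‖ * (Real.pi / 2) := by
        calc x.im * Complex.arg (1+x) ≤ |x.im * Complex.arg (1+x)| := le_abs_self _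
        _ = |x.im| * |Complex.arg (1+x)| := abs_mul _ _
        _ ≤ ‖x‖ * (Real.pi / 2) := by
            apply mul_le_mul him harg1x (abs_nonneg _) (norm_nonneg _)
      first
      | · -- near-zero bound
          rw [hnormu]
          apply Real.exp_le_exp.mpr
          rw [hrecomp]
          have h1 : 0 ≤ x.re * Real.log (‖1+x‖) := mul_nonneg hre0 hlog0
          have hnorm' : ‖x‖ ≤ 1 := hnorm
          nlinarith
      | · -- bound at infinity
          rw [hnormu]
          set s := ‖x‖ with hs
          have hs1 : (1:ℝ) ≤ s := le_trans (Real.one_le_exp (by positivity)) hnorm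
          have hlogs : Real.pi / Real.sin ε ≤ Real.log s :=
            (Real.le_log_iff_exp_le hxpos).mpr hnorm
          have hlogs0 : 0 ≤ Real.log s := le_trans (by positivity) hlogs
          have hloglog : Real.log s ≤ Real.log (‖1+x‖) :=
            Real.log_le_log hxpos habs1x
          have hkey : s * Real.sin ε * Real.log s ≤ x.re * Real.log (‖1+x‖) :=
            mul_le_mul hresin hloglog hlogs0 hre0
          rw [Real.rpow_def_of_pos hxpos, ← Real.exp_add]
          apply Real.exp_le_exp.mpr
          rw [hrecomp]
          -- need: -(x.re * log|1+x|) + x.im*arg(1+x) ≤ π/2 + log s * (-(sin ε/2) * s)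
          have hπs : Real.pi / 2 ≤ Real.sin ε / 2 * Real.log s := by
            rw [div_le_iff₀ hsin] at hlogs
            linarith
          have hint : s * (Real.pi / 2) ≤ s * (Real.sin ε / 2 * Real.log s) :=
            mul_le_mul_of_nonneg_left hπs (by linarith)
          linarith [hkey, himarg, hint]
    }
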